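/- Let n_1 ≤ n_2 ≤ ... ≤ n_r be positive integers with k ≤ n_1. The maximum number of edges in a subgraph of the complete multipartite graph K_{n_1,...,n_r} containing no k pairwise vertex-disjoint edges (no matching of size k) equals (k-1)(n_2 + n_3 + ... + n_r). -/

import Mathlib

/-- `H` (a family of finite edge sets) contains a matching of size `k`:
`k` pairwise disjoint edges. -/
def hasMatching {α : Type*} [DecidableEq α] (H : Finset (Finset α)) (k : ℕ) : Prop :=
  ∃ M ⊆ H, M.card = k ∧ (M : Set (Finset α)).Pairwise Disjoint

/-- The edge set of the complete `r`-partite `s`-uniform hypergraph with parts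
`V i = Fin (n i)`: all `s`-sets meeting each part in at most one vertex. -/
def crossEdges (r s : ℕ) (n : Fin r → ℕ) : Finset (Finset ((i : Fin r) × Fin (n i))) :=
  Finset.univ.filter fun S =>
    S.card = s ∧ ∀ i : Fin r, (S.filter fun v => v.1 = i).card ≤ 1

set_option linter.unusedSectionVars false
namespace KK2

variable {α : Type*} [DecidableEq α] {ι : Type*} [DecidableEq ι]

/-- `H` consists of crossing pairs inside `V`. -/
def Cross (part : α → ι) (V : Finset α) (H : Finset (Finset α)) : Prop :=
  ∀ e ∈ H, ∃ u v, u ∈ V ∧ v ∈ V ∧ part u ≠ part v ∧ e = {u, v}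

def deg (H : Finset (Finset α)) (u : α) : ℕ := (H.filter fun e => u ∈ e).card

lemma pair_eq_pair {u v a b : α} (hab : a ≠ b) (h : ({u,v} : Finset α) = {a,b}) :
    (u = a ∧ v = b) ∨ (u = b ∧ v = a) := by
  have hu : u ∈ ({a,b} : Finset α) := by rw [← h]; simp
  have hv : v ∈ ({a,b} : Finset α) := by rw [← h]; simp
  simp only [Finset.mem_insert, Finset.mem_singleton] at hu hv
  have ha : a ∈ ({u,v} : Finset α) := by rw [h]; simp
  have hb : b ∈ ({u,v} : Finset α) := by rw [h]; simp
  simp only [Finset.mem_insert, Finset.mem_singleton] at ha hb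
  rcases hu with rfl | rfl <;> rcases hv with rfl | rfl <;> tauto

section cross
variable {part : α → ι} {V : Finset α} {H : Finset (Finset α)}

lemma Cross.parts_ne (hc : Cross part V H) {u w : α} (h : ({u,w} : Finset α) ∈ H) :
    part u ≠ part w := by
  obtain ⟨a, b, _, _, hab, he⟩ := hc _ h
  have hab' : a ≠ b := fun hh => hab (by rw [hh])
  rcases pair_eq_pair hab' he with ⟨rfl, rfl⟩ | ⟨rfl, rfl⟩
  · exact hab
  · exact fun hh => hab hh.symm

lemma Cross.ne (hc : Cross part V H) {u w : α} (h : ({u,w} : Finset α) ∈ H) : u ≠ w :=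
  fun hh => (hc.parts_ne h) (by rw [hh])

lemma Cross.mem_left (hc : Cross part V H) {u w : α} (h : ({u,w} : Finset α) ∈ H) : u ∈ V := by
  obtain ⟨a, b, haV, hbV, hab, he⟩ := hc _ h
  have hab' : a ≠ b := fun hh => hab (by rw [hh])
  rcases pair_eq_pair hab' he with ⟨rfl, rfl⟩ | ⟨rfl, rfl⟩ <;> assumption

lemma Cross.card_two (hc : Cross part V H) {e : Finset α} (he : e ∈ H) : e.card = 2 := by
  obtain ⟨a, b, _, _, hab, rfl⟩ := hc _ he
  exact Finset.card_pair (fun hh => hab (by rw [hh]))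

/-- degree as number of neighbours -/
lemma deg_eq_card_nbrs (hc : Cross part V H) (u : α) :
    deg H u = (V.filter fun w => ({u,w} : Finset α) ∈ H).card := by
  classical
  symm
  apply Finset.card_bij (fun w _ => ({u,w} : Finset α))
  · intro w hw
    simp only [Finset.mem_filter] at hw ⊢
    exact ⟨hw.2, by simp⟩
  · intro w hw w' hw' hww
    simp only [Finset.mem_filter] at hw hw'
    have h1 : w ≠ u := fun hh => (hc.ne hw.2) (by rw [hh])
    have : w ∈ ({u, w'} : Finset α) := by rw [← hww]; simp
    simp only [Finset.mem_insert, Finset.mem_singleton] at this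
    tauto
  · intro e he
    simp only [Finset.mem_filter] at he
    obtain ⟨heH, hue⟩ := he
    obtain ⟨a, b, haV, hbV, hab, rfl⟩ := hc _ heH
    have hab' : a ≠ b := fun hh => hab (by rw [hh])
    simp only [Finset.mem_insert, Finset.mem_singleton] at hue
    rcases hue with rfl | rfl
    · exact ⟨b, by simp [Finset.mem_filter, hbV, heH]⟩
    · refine ⟨a, by simp only [Finset.mem_filter]; exact ⟨haV, by rwa [Finset.pair_comm]⟩, ?_⟩
      rw [Finset.pair_comm]

lemma nbr_symm {u w : α} (h : ({u,w} : Finset α) ∈ H) : ({w,u} : Finset α) ∈ H := by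
  rwa [Finset.pair_comm]

/-- host degree bound -/
lemma deg_le_host (hc : Cross part V H) (u : α) :
    deg H u + (V.filter fun w => part w = part u).card ≤ V.card := by
  rw [deg_eq_card_nbrs hc]
  have hsub : (V.filter fun w => ({u,w} : Finset α) ∈ H)
      ⊆ V.filter fun w => ¬ (part w = part u) := by
    intro w hw
    simp only [Finset.mem_filter] at hw ⊢
    exact ⟨hw.1, fun hh => (hc.parts_ne hw.2) hh.symm⟩
  calc (V.filter fun w => ({u,w} : Finset α) ∈ H).card
        + (V.filter fun w => part w = part u).card
      ≤ (V.filter fun w => ¬ (part w = part u)).card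
        + (V.filter fun w => part w = part u).card := by
        exact Nat.add_le_add_right (Finset.card_le_card hsub) _
    _ = V.card := by
        rw [add_comm]
        exact Finset.card_filter_add_card_filter_not _

section matching
variable {M H : Finset (Finset α)} {part : α → ι} {V : Finset α}

/-- helper: build hasMatching from an explicit matching -/
lemma hasMatching_of (hsub : M ⊆ H) (hd : (M : Set (Finset α)).Pairwise Disjoint)
    {k : ℕ} (hcard : M.card = k) : hasMatching H k := ⟨M, hsub, hcard, hd⟩

lemma vm_subset (hc : Cross part V H) (hMH : M ⊆ H) : M.biUnion id ⊆ V := by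
  intro a ha
  simp only [Finset.mem_biUnion, id] at ha
  obtain ⟨e, heM, hae⟩ := ha
  obtain ⟨u, v, huV, hvV, _, rfl⟩ := hc _ (hMH heM)
  simp only [Finset.mem_insert, Finset.mem_singleton] at hae
  rcases hae with rfl | rfl <;> assumption

lemma card_vm (hc : Cross part V H) (hMH : M ⊆ H)
    (hd : (M : Set (Finset α)).Pairwise Disjoint) :
    (M.biUnion id).card = 2 * M.card := by
  rw [show (M.biUnion id) = M.biUnion (fun e => e) from rfl,
    Finset.card_biUnion (fun e he f hf hef => hd he hf hef)]
  rw [Finset.sum_congr rfl (fun e he => hc.card_two (hMH he))]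
  simp [mul_comm]

lemma mem_vm {e : Finset α} (heM : e ∈ M) {a : α} (ha : a ∈ e) : a ∈ M.biUnion id :=
  Finset.mem_biUnion.2 ⟨e, heM, ha⟩

/-- 3-augment: replace e={u,v} by {u,x},{v,y} with x,y unmatched and distinct -/
lemma augment2 (hc : Cross part V H) (hMH : M ⊆ H)
    (hd : (M : Set (Finset α)).Pairwise Disjoint) {e : Finset α} {u v x y : α}
    (heM : e ∈ M) (he : e = {u,v})
    (hx : x ∉ M.biUnion id) (hy : y ∉ M.biUnion id) (hxy : x ≠ y)
    (hux : ({u,x} : Finset α) ∈ H) (hvy : ({v,y} : Finset α) ∈ H) :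
    hasMatching H (M.card + 1) := by
  classical
  have huv : u ≠ v := by
    have := hc.ne (show ({u,v} : Finset α) ∈ H from he ▸ hMH heM); exact this
  have hue : u ∈ e := by rw [he]; simp
  have hve : v ∈ e := by rw [he]; simp
  have hux' : u ≠ x := fun h => hx (h ▸ mem_vm heM hue)
  have huy : u ≠ y := fun h => hy (h ▸ mem_vm heM hue)
  have hvx : v ≠ x := fun h => hx (h ▸ mem_vm heM hve)
  have hvy' : v ≠ y := fun h => hy (h ▸ mem_vm heM hve)
  -- key membership fact: for f ∈ M.erase e, f is disjoint from {u,v,x,y}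
  have hfree : ∀ f ∈ M.erase e, ∀ a ∈ f, a ≠ u ∧ a ≠ v ∧ a ≠ x ∧ a ≠ y := by
    intro f hf a haf
    have hfM := Finset.mem_of_mem_erase hf
    have hfe : f ≠ e := Finset.ne_of_mem_erase hf
    have hdisj := hd (Finset.mem_coe.2 hfM) (Finset.mem_coe.2 heM) hfe
    refine ⟨?_, ?_, ?_, ?_⟩
    · rintro rfl; exact (Finset.disjoint_left.1 hdisj haf) hue
    · rintro rfl; exact (Finset.disjoint_left.1 hdisj haf) hve
    · rintro rfl; exact hx (mem_vm hfM haf)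
    · rintro rfl; exact hy (mem_vm hfM haf)
  set M' : Finset (Finset α) := insert {u,x} (insert {v,y} (M.erase e)) with hM'
  have hnew1 : ({u,x} : Finset α) ∉ insert ({v,y} : Finset α) (M.erase e) := by
    simp only [Finset.mem_insert]
    rintro (h | h)
    · have : u ∈ ({v,y} : Finset α) := by rw [← h]; simp
      simp only [Finset.mem_insert, Finset.mem_singleton] at this; tauto
    · have := (hfree _ h u (by simp)).1; exact this rfl
  have hnew2 : ({v,y} : Finset α) ∉ M.erase e := by
    intro h; exact (hfree _ h v (by simp)).2.1 rfl
  refine hasMatching_of (M := M') ?_ ?_ ?_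
  · intro f hf
    simp only [hM', Finset.mem_insert] at hf
    rcases hf with rfl | rfl | hf
    · exact hux
    · exact hvy
    · exact hMH (Finset.mem_of_mem_erase hf)
  · intro a ha b hb hab
    simp only [hM', Finset.coe_insert, Set.mem_insert_iff, Finset.mem_coe] at ha hb
    have duxvy : Disjoint ({u,x} : Finset α) ({v,y} : Finset α) := by
      simp [Finset.disjoint_left, huv, hux'.symm, hxy, huy, hvx]
      tauto
    have dold : ∀ f ∈ M.erase e, Disjoint ({u,x} : Finset α) f ∧ Disjoint ({v,y} : Finset α) f := by
      intro f hf
      constructor <;> rw [Finset.disjoint_right] <;> intro a haf <;>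
        have h4 := hfree _ hf a haf <;>
        simp only [Finset.mem_insert, Finset.mem_singleton] <;> tauto
    rcases ha with rfl | rfl | ha <;> rcases hb with rfl | rfl | hb
    · exact absurd rfl hab
    · exact duxvy
    · exact (dold _ hb).1
    · exact duxvy.symm
    · exact absurd rfl hab
    · exact (dold _ hb).2
    · exact ((dold _ ha).1).symm
    · exact ((dold _ ha).2).symm
    · exact hd (Finset.mem_coe.2 (Finset.mem_of_mem_erase ha))
        (Finset.mem_coe.2 (Finset.mem_of_mem_erase hb)) hab
  · rw [hM', Finset.card_insert_of_notMem hnew1, Finset.card_insert_of_notMem hnew2,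
      Finset.card_erase_of_mem heM]
    have : 1 ≤ M.card := Finset.card_pos.2 ⟨e, heM⟩
    omega

/-- 5-augment: replace e={u,v}, f={u',v'} by {u,x},{v,v'},{u',y} -/
lemma augment3 (hc : Cross part V H) (hMH : M ⊆ H)
    (hd : (M : Set (Finset α)).Pairwise Disjoint) {e f : Finset α} {u v u' v' x y : α}
    (heM : e ∈ M) (hfM : f ∈ M) (hef : e ≠ f) (he : e = {u,v}) (hf : f = {u',v'})
    (hx : x ∉ M.biUnion id) (hy : y ∉ M.biUnion id) (hxy : x ≠ y)
    (hux : ({u,x} : Finset α) ∈ H) (hvv : ({v,v'} : Finset α) ∈ H)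
    (huy : ({u',y} : Finset α) ∈ H) :
    hasMatching H (M.card + 1) := by
  classical
  have huv : u ≠ v := hc.ne (show ({u,v} : Finset α) ∈ H from he ▸ hMH heM)
  have huv' : u' ≠ v' := hc.ne (show ({u',v'} : Finset α) ∈ H from hf ▸ hMH hfM)
  have hue : u ∈ e := by rw [he]; simp
  have hve : v ∈ e := by rw [he]; simp
  have huf : u' ∈ f := by rw [hf]; simp
  have hvf : v' ∈ f := by rw [hf]; simp
  have hdef := hd (Finset.mem_coe.2 heM) (Finset.mem_coe.2 hfM) hef
  -- all six vertices pairwise distinct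
  have sep : ∀ a ∈ e, ∀ b ∈ f, a ≠ b := by
    intro a ha b hb; rintro rfl; exact (Finset.disjoint_left.1 hdef ha) hb
  have hvm : ∀ a, (a ∈ e ∨ a ∈ f) → a ≠ x ∧ a ≠ y := by
    intro a ha
    constructor <;> rintro rfl
    · rcases ha with h | h
      · exact hx (mem_vm heM h)
      · exact hx (mem_vm hfM h)
    · rcases ha with h | h
      · exact hy (mem_vm heM h)
      · exact hy (mem_vm hfM h)
  have hfree : ∀ g ∈ (M.erase e).erase f, ∀ a ∈ g,
      a ≠ u ∧ a ≠ v ∧ a ≠ u' ∧ a ≠ v' ∧ a ≠ x ∧ a ≠ y := by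
    intro g hg a hag
    have hgM : g ∈ M := Finset.mem_of_mem_erase (Finset.mem_of_mem_erase hg)
    have hgf : g ≠ f := Finset.ne_of_mem_erase hg
    have hge : g ≠ e := Finset.ne_of_mem_erase (Finset.mem_of_mem_erase hg)
    have hdge := hd (Finset.mem_coe.2 hgM) (Finset.mem_coe.2 heM) hge
    have hdgf := hd (Finset.mem_coe.2 hgM) (Finset.mem_coe.2 hfM) hgf
    refine ⟨?_, ?_, ?_, ?_, ?_, ?_⟩ <;> rintro rfl
    · exact (Finset.disjoint_left.1 hdge hag) hue
    · exact (Finset.disjoint_left.1 hdge hag) hve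
    · exact (Finset.disjoint_left.1 hdgf hag) huf
    · exact (Finset.disjoint_left.1 hdgf hag) hvf
    · exact hx (mem_vm hgM hag)
    · exact hy (mem_vm hgM hag)
  set R : Finset (Finset α) := (M.erase e).erase f with hR
  set M' : Finset (Finset α) := insert {u,x} (insert {v,v'} (insert {u',y} R)) with hM'
  -- pairwise distinctness of the six vertices
  have n1 : u ≠ u' := sep _ hue _ huf
  have n2 : u ≠ v' := sep _ hue _ hvf
  have n3 : v ≠ u' := sep _ hve _ huf
  have n4 : v ≠ v' := sep _ hve _ hvf
  have n5 : u ≠ x := (hvm u (Or.inl hue)).1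
  have n6 : u ≠ y := (hvm u (Or.inl hue)).2
  have n7 : v ≠ x := (hvm v (Or.inl hve)).1
  have n8 : v ≠ y := (hvm v (Or.inl hve)).2
  have n9 : u' ≠ x := (hvm u' (Or.inr huf)).1
  have n10 : u' ≠ y := (hvm u' (Or.inr huf)).2
  have n11 : v' ≠ x := (hvm v' (Or.inr hvf)).1
  have n12 : v' ≠ y := (hvm v' (Or.inr hvf)).2
  have d12 : Disjoint ({u,x} : Finset α) ({v,v'} : Finset α) := by
    rw [Finset.disjoint_left]; intro a ha hb
    simp only [Finset.mem_insert, Finset.mem_singleton] at ha hb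
    rcases ha with rfl | rfl
    · rcases hb with h | h
      · exact huv h
      · exact n2 h
    · rcases hb with h | h
      · exact n7 h.symm
      · exact n11 h.symm
  have d13 : Disjoint ({u,x} : Finset α) ({u',y} : Finset α) := by
    rw [Finset.disjoint_left]; intro a ha hb
    simp only [Finset.mem_insert, Finset.mem_singleton] at ha hb
    rcases ha with rfl | rfl
    · rcases hb with h | h
      · exact n1 h
      · exact n6 h
    · rcases hb with h | h
      · exact n9 h.symm
      · exact hxy h
  have d23 : Disjoint ({v,v'} : Finset α) ({u',y} : Finset α) := by
    rw [Finset.disjoint_left]; intro a ha hb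
    simp only [Finset.mem_insert, Finset.mem_singleton] at ha hb
    rcases ha with rfl | rfl
    · rcases hb with h | h
      · exact n3 h
      · exact n8 h
    · rcases hb with h | h
      · exact huv' h.symm
      · exact n12 h
  have dold : ∀ g ∈ R, Disjoint ({u,x} : Finset α) g ∧ Disjoint ({v,v'} : Finset α) g
      ∧ Disjoint ({u',y} : Finset α) g := by
    intro g hg
    refine ⟨?_, ?_, ?_⟩ <;> rw [Finset.disjoint_right] <;> intro a hag <;>
      have h6 := hfree _ hg a hag <;>
      simp only [Finset.mem_insert, Finset.mem_singleton] <;> tauto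
  have hn3 : ({u',y} : Finset α) ∉ R := fun h => (hfree _ h u' (by simp)).2.2.1 rfl
  have hn2 : ({v,v'} : Finset α) ∉ insert ({u',y} : Finset α) R := by
    simp only [Finset.mem_insert]
    rintro (h | h)
    · have : v ∈ ({u',y} : Finset α) := by rw [← h]; simp
      simp only [Finset.mem_insert, Finset.mem_singleton] at this
      rcases this with h' | h'
      · exact n3 h'
      · exact n8 h'
    · exact (hfree _ h v (by simp)).2.1 rfl
  have hn1 : ({u,x} : Finset α) ∉ insert ({v,v'} : Finset α) (insert ({u',y} : Finset α) R) := by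
    simp only [Finset.mem_insert]
    rintro (h | h | h)
    · have : u ∈ ({v,v'} : Finset α) := by rw [← h]; simp
      simp only [Finset.mem_insert, Finset.mem_singleton] at this
      rcases this with h' | h'
      · exact huv h'
      · exact n2 h'
    · have : u ∈ ({u',y} : Finset α) := by rw [← h]; simp
      simp only [Finset.mem_insert, Finset.mem_singleton] at this
      rcases this with h' | h'
      · exact n1 h'
      · exact n6 h'
    · exact (hfree _ h u (by simp)).1 rfl
  refine hasMatching_of (M := M') ?_ ?_ ?_
  · intro g hg
    simp only [hM', Finset.mem_insert] at hg
    rcases hg with rfl | rfl | rfl | hg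
    · exact hux
    · exact hvv
    · exact huy
    · exact hMH (Finset.mem_of_mem_erase (Finset.mem_of_mem_erase hg))
  · intro a ha b hb hab
    simp only [hM', Finset.coe_insert, Set.mem_insert_iff, Finset.mem_coe] at ha hb
    rcases ha with rfl | rfl | rfl | ha <;> rcases hb with rfl | rfl | rfl | hb
    · exact absurd rfl hab
    · exact d12
    · exact d13
    · exact (dold _ hb).1
    · exact d12.symm
    · exact absurd rfl hab
    · exact d23
    · exact (dold _ hb).2.1
    · exact d13.symm
    · exact d23.symm
    · exact absurd rfl hab
    · exact (dold _ hb).2.2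
    · exact ((dold _ ha).1).symm
    · exact ((dold _ ha).2.1).symm
    · exact ((dold _ ha).2.2).symm
    · exact hd (Finset.mem_coe.2 (Finset.mem_of_mem_erase (Finset.mem_of_mem_erase ha)))
        (Finset.mem_coe.2 (Finset.mem_of_mem_erase (Finset.mem_of_mem_erase hb))) hab
  · rw [hM', Finset.card_insert_of_notMem hn1, Finset.card_insert_of_notMem hn2,
      Finset.card_insert_of_notMem hn3, hR,
      Finset.card_erase_of_mem (Finset.mem_erase.2 ⟨Ne.symm ?_, hfM⟩),
      Finset.card_erase_of_mem heM]
    · have h1 : 1 ≤ M.card := Finset.card_pos.2 ⟨e, heM⟩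
      have h2 : 2 ≤ M.card := by
        have := Finset.one_lt_card.2 ⟨e, heM, f, hfM, hef⟩; omega
      omega
    · exact hef

/-- The key lemma: some edge of the matching M has small degree sum. -/
lemma exists_light_edge {I : Finset ι} (hc : Cross part V H) (hI : I.Nonempty)
    (hpI : ∀ v ∈ V, part v ∈ I)
    (hMH : M ⊆ H) (hd : (M : Set (Finset α)).Pairwise Disjoint) (hm : M.Nonempty)
    (hsize : ∀ i ∈ I, M.card + 1 ≤ (V.filter fun v => part v = i).card)
    (hfree : ¬ hasMatching H (M.card + 1)) :
    ∃ e ∈ M, ∃ u v, e = {u,v} ∧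
      deg H u + deg H v ≤
        (V.card - I.inf' hI fun i => (V.filter fun v => part v = i).card) + M.card := by
  classical
  set n : ι → ℕ := fun i => (V.filter fun v => part v = i).card with hn
  set p : ℕ := I.inf' hI n with hp
  set N : ℕ := V.card with hN
  set m : ℕ := M.card with hm'
  set T : ℕ := N - p with hT
  by_contra hno
  push_neg at hno
  have hv : ∀ e ∈ M, ∀ u v : α, e = {u,v} → T + m + 1 ≤ deg H u + deg H v := by
    intro e he u v huv
    have := hno e he u v huv
    omega
  set VM : Finset α := M.biUnion id with hVM
  have hVMV : VM ⊆ V := vm_subset hc hMH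
  have hcVM : VM.card = 2 * m := card_vm hc hMH hd
  set q : ι → ℕ := fun i => (VM.filter fun w => part w = i).card with hq
  set dI : α → ℕ := fun u => (VM.filter fun w => ({u,w} : Finset α) ∈ H).card with hdI
  set dD : α → ℕ := fun u => ((V \ VM).filter fun w => ({u,w} : Finset α) ∈ H).card with hdD
  -- degree splits
  have hsplit : ∀ u : α, deg H u = dI u + dD u := by
    intro u
    rw [deg_eq_card_nbrs hc]
    have : V = VM ∪ (V \ VM) := by rw [Finset.union_sdiff_of_subset hVMV]
    rw [this, Finset.filter_union, Finset.card_union_of_disjoint]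
    exact Finset.disjoint_filter_filter (Finset.disjoint_sdiff)
  -- q bounds
  have hq_le : ∀ i, q i ≤ m := by
    intro i
    have heq : VM.filter (fun w => part w = i) = M.biUnion fun e => e.filter fun w => part w = i := by
      rw [hVM]; rw [show (M.biUnion id) = M.biUnion (fun e => e) from rfl]
      exact Finset.filter_biUnion _ _ _
    rw [hq]; simp only []
    rw [heq]
    calc (M.biUnion fun e => e.filter fun w => part w = i).card
        ≤ ∑ e ∈ M, (e.filter fun w => part w = i).card := Finset.card_biUnion_le
      _ ≤ ∑ _e ∈ M, 1 := by
          apply Finset.sum_le_sum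
          intro e he
          apply Finset.card_le_one.2
          intro a ha b hb
          simp only [Finset.mem_filter] at ha hb
          obtain ⟨u', v', _, _, hne, rfl⟩ := hc _ (hMH he)
          simp only [Finset.mem_insert, Finset.mem_singleton] at ha hb
          rcases ha.1 with rfl | rfl <;> rcases hb.1 with rfl | rfl <;>
            first | rfl | (exact absurd (ha.2.trans hb.2.symm) hne) |
              (exact absurd (hb.2.trans ha.2.symm) hne)
      _ = m := by simp [hm']
  have hq_sum : ∑ i ∈ I, q i = 2 * m := by
    rw [hq]
    rw [← Finset.card_eq_sum_card_fiberwise (fun x hx => hpI x (hVMV hx))]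
    exact hcVM
  -- inside-degree bound
  have hdI_le : ∀ u : α, dI u + q (part u) ≤ 2 * m := by
    intro u
    have hsub : VM.filter (fun w => ({u,w} : Finset α) ∈ H)
        ⊆ VM.filter fun w => ¬ (part w = part u) := by
      intro w hw
      simp only [Finset.mem_filter] at hw ⊢
      exact ⟨hw.1, fun hh => (hc.parts_ne hw.2) hh.symm⟩
    calc dI u + q (part u)
        ≤ (VM.filter fun w => ¬ (part w = part u)).card
          + (VM.filter fun w => part w = part u).card :=
          Nat.add_le_add (Finset.card_le_card hsub) le_rfl
      _ = VM.card := by rw [add_comm]; exact Finset.card_filter_add_card_filter_not _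
      _ = 2 * m := hcVM
  -- host bound (deg u ≤ T in additive form)
  have hdeg : ∀ u ∈ V, deg H u + p ≤ N := by
    intro u hu
    have h1 := deg_le_host hc u
    have h2 : p ≤ n (part u) := Finset.inf'_le n (hpI u hu)
    simp only [hn] at h2
    omega
  have hpN : p ≤ N := by
    obtain ⟨i₀, hi₀, hpi⟩ := Finset.exists_mem_eq_inf' hI n
    have : n i₀ ≤ N := Finset.card_le_card (Finset.filter_subset _ _)
    omega
  -- T as a sum over non-minimal parts
  obtain ⟨i₀, hi₀I, hpi₀⟩ := Finset.exists_mem_eq_inf' hI n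
  have hNsum : N = ∑ i ∈ I, n i := by
    rw [hN, hn]; exact Finset.card_eq_sum_card_fiberwise hpI
  have hNsplit : N = n i₀ + ∑ i ∈ I.erase i₀, n i := by
    rw [hNsum, Finset.add_sum_erase I n hi₀I]
  have hTge : (I.card - 1) * (m + 1) ≤ T := by
    have h1 : (I.erase i₀).card • (m+1) ≤ ∑ i ∈ I.erase i₀, n i :=
      Finset.card_nsmul_le_sum _ _ _ (fun i hi => hsize i (Finset.mem_of_mem_erase hi))
    rw [Finset.card_erase_of_mem hi₀I] at h1
    have h2 : p = n i₀ := hpi₀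
    simp only [smul_eq_mul] at h1
    omega
  -- Claim A: no edge has both ends with ≤ 1 unmatched neighbours (needs ≥ 3 parts)
  have hA : ∀ e ∈ M, ∀ u v : α, e = {u,v} → 3 ≤ I.card →
      dD u ≤ 1 → dD v ≤ 1 → False := by
    intro e he u v huv hI3 hu1 hv1
    have hH : ({u,v} : Finset α) ∈ H := huv ▸ hMH he
    have h1 := hv e he u v huv
    have h2 := hsplit u; have h3 := hsplit v
    have h4 := hdI_le u; have h5 := hdI_le v
    have hpne : part u ≠ part v := hc.parts_ne hH
    have hpuI : part u ∈ I := hpI u (hc.mem_left hH)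
    have hpvI : part v ∈ I := hpI v (hc.mem_left (nbr_symm hH))
    have hpv' : part v ∈ I.erase (part u) :=
      Finset.mem_erase.2 ⟨fun h => hpne h.symm, hpvI⟩
    have hsum2 : q (part u) + (q (part v) + ∑ i ∈ (I.erase (part u)).erase (part v), q i)
        = 2 * m := by
      rw [Finset.add_sum_erase _ q hpv', Finset.add_sum_erase _ q hpuI]
      exact hq_sum
    have hS : ∑ i ∈ (I.erase (part u)).erase (part v), q i ≤ (I.card - 2) * m := by
      have h7 := Finset.sum_le_card_nsmul ((I.erase (part u)).erase (part v)) q m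
        (fun i _ => hq_le i)
      rw [Finset.card_erase_of_mem hpv', Finset.card_erase_of_mem hpuI] at h7
      simp only [smul_eq_mul] at h7; rwa [Nat.sub_sub] at h7
    obtain ⟨c, hcI⟩ : ∃ c, I.card = c + 3 := ⟨I.card - 3, by omega⟩
    have hTge' : (c+1) * m + (m + c + 2) ≤ T := by
      have h8 : I.card - 1 = c + 2 := by omega
      rw [h8] at hTge
      have exp1 : (c + 2) * (m + 1) = (c+1) * m + (m + c + 2) := by ring
      omega
    have hSle : ∑ i ∈ (I.erase (part u)).erase (part v), q i ≤ (c+1) * m := by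
      have h9 : I.card - 2 = c + 1 := by omega
      rwa [h9] at hS
    have k1 : deg H u + deg H v ≤ 2*m + 2 + (∑ i ∈ (I.erase (part u)).erase (part v), q i) := by
      omega
    have k2 : T ≤ m + 1 + (∑ i ∈ (I.erase (part u)).erase (part v), q i) := by omega
    omega
  -- Claim B: both ends having an unmatched neighbour forces a unique common one
  have hBoth : ∀ e ∈ M, ∀ u v : α, e = {u,v} →
      1 ≤ dD u → 1 ≤ dD v → dD u ≤ 1 ∧ dD v ≤ 1 := by
    intro e he u v huv hu1 hv1
    obtain ⟨y₀, hy₀⟩ := Finset.card_pos.1 (by omega : 0 < dD v)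
    have huniq : ∀ x ∈ (V \ VM).filter (fun w => ({u,w} : Finset α) ∈ H),
        ∀ y ∈ (V \ VM).filter (fun w => ({v,w} : Finset α) ∈ H), x = y := by
      intro x hx y hy
      by_contra hxy
      simp only [Finset.mem_filter, Finset.mem_sdiff] at hx hy
      exact hfree (augment2 hc hMH hd he huv hx.1.2 hy.1.2 hxy hx.2 hy.2)
    constructor
    · apply Finset.card_le_one.2
      intro a ha b hb
      rw [huniq a ha y₀ hy₀, huniq b hb y₀ hy₀]
    · apply Finset.card_le_one.2
      intro a ha b hb
      obtain ⟨x₀, hx₀⟩ := Finset.card_pos.1 (by omega : 0 < dD u)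
      rw [← huniq x₀ hx₀ a ha, ← huniq x₀ hx₀ b hb]
  -- case on the number of parts
  rcases Nat.lt_or_ge I.card 3 with hI2 | hI3
  · -- at most 2 parts: direct contradiction for any edge of M
    obtain ⟨e, he⟩ := hm
    obtain ⟨u, v, huV, hvV, hpne, huv⟩ := hc _ (hMH he)
    have hH : ({u,v} : Finset α) ∈ H := huv ▸ hMH he
    have hpuI : part u ∈ I := hpI u huV
    have hpvI : part v ∈ I := hpI v hvV
    have hIeq : I = {part u, part v} := by
      apply (Finset.eq_of_subset_of_card_le ?_ ?_).symm
      · intro i hi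
        simp only [Finset.mem_insert, Finset.mem_singleton] at hi
        rcases hi with rfl | rfl <;> assumption
      · rw [Finset.card_pair hpne]; omega
    have hqm : q (part u) = m ∧ q (part v) = m := by
      have h1 : ∑ i ∈ I, q i = q (part u) + q (part v) := by
        rw [hIeq, Finset.sum_pair hpne]
      have h2 := hq_le (part u); have h3 := hq_le (part v)
      constructor <;> omega
    have h1 := hv e he u v huv
    rcases Nat.eq_zero_or_pos (dD u) with hu0 | hu1
    · -- u passive: deg u ≤ m, deg v ≤ T
      have h2 := hsplit u; have h3 := hdI_le u
      have h4 := hdeg v hvV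
      omega
    rcases Nat.eq_zero_or_pos (dD v) with hv0 | hv1
    · have h2 := hsplit v; have h3 := hdI_le v
      have h4 := hdeg u huV
      omega
    · -- both active: automatic augment since only two parts
      obtain ⟨x, hx⟩ := Finset.card_pos.1 (by omega : 0 < dD u)
      obtain ⟨y, hy⟩ := Finset.card_pos.1 (by omega : 0 < dD v)
      simp only [Finset.mem_filter, Finset.mem_sdiff] at hx hy
      have hpx : part x = part v := by
        have h5 : part x ≠ part u := fun h => (hc.parts_ne hx.2) h.symm
        have h6 : part x ∈ I := hpI x hx.1.1
        rw [hIeq] at h6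
        simp only [Finset.mem_insert, Finset.mem_singleton] at h6
        tauto
      have hpy : part y = part u := by
        have h5 : part y ≠ part v := fun h => (hc.parts_ne hy.2) h.symm
        have h6 : part y ∈ I := hpI y hy.1.1
        rw [hIeq] at h6
        simp only [Finset.mem_insert, Finset.mem_singleton] at h6
        tauto
      have hxy : x ≠ y := by
        intro h; rw [h, hpy] at hpx; exact hpne hpx
      exact hfree (augment2 hc hMH hd he huv hx.1.2 hy.1.2 hxy hx.2 hy.2)
  · -- at least 3 parts
    -- structural form of every matching edge
    have hStruct : ∀ e ∈ M, ∃ u v : α, e = {u,v} ∧ dD v = 0 ∧ 2 ≤ dD u := by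
      intro e he
      obtain ⟨u, v, huV, hvV, hpne, huv⟩ := hc _ (hMH he)
      rcases Nat.eq_zero_or_pos (dD v) with hv0 | hv1
      · refine ⟨u, v, huv, hv0, ?_⟩
        by_contra hlt
        exact hA e he u v huv hI3 (by omega) (by omega)
      rcases Nat.eq_zero_or_pos (dD u) with hu0 | hu1
      · refine ⟨v, u, by rw [huv, Finset.pair_comm], hu0, ?_⟩
        by_contra hlt
        exact hA e he u v huv hI3 (by omega) (by omega)
      · have := hBoth e he u v huv hu1 hv1
        exact absurd (hA e he u v huv hI3 this.1 this.2) not_false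
    obtain ⟨e, he⟩ := hm
    obtain ⟨u, v, huv, hv0, hu2⟩ := hStruct e he
    have hH : ({u,v} : Finset α) ∈ H := huv ▸ hMH he
    have huV : u ∈ V := hc.mem_left hH
    have hvV : v ∈ V := hc.mem_left (nbr_symm hH)
    -- the passive end has degree ≥ m+1
    have hdegv : m + 1 ≤ deg H v := by
      have h1 := hv e he u v huv
      have h2 := hdeg u huV
      omega
    -- pigeonhole: some other edge has both ends adjacent to v
    have hdIv : m + 1 ≤ dI v := by
      have := hsplit v; omega
    have hfib : (VM.filter fun w => ({v,w} : Finset α) ∈ H)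
        = M.biUnion fun f => f.filter fun w => ({v,w} : Finset α) ∈ H := by
      rw [hVM, show (M.biUnion id) = M.biUnion (fun e => e) from rfl]
      exact Finset.filter_biUnion _ _ _
    have hsum : ∑ f ∈ M, (f.filter fun w => ({v,w} : Finset α) ∈ H).card = dI v := by
      rw [hdI]; simp only []
      rw [hfib, Finset.card_biUnion]
      intro f hf g hg hfg
      exact Finset.disjoint_filter_filter (hd (Finset.mem_coe.2 hf) (Finset.mem_coe.2 hg) hfg)
    have hce : (e.filter fun w => ({v,w} : Finset α) ∈ H).card ≤ 1 := by
      have hsub : (e.filter fun w => ({v,w} : Finset α) ∈ H) ⊆ {u} := by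
        intro w hw
        simp only [Finset.mem_filter] at hw
        rw [huv] at hw
        have hw1 := hw.1
        simp only [Finset.mem_insert, Finset.mem_singleton] at hw1 ⊢
        rcases hw1 with rfl | rfl
        · rfl
        · exact absurd rfl (hc.ne hw.2)
      calc (e.filter fun w => ({v,w} : Finset α) ∈ H).card
          ≤ ({u} : Finset α).card := Finset.card_le_card hsub
        _ = 1 := Finset.card_singleton _
    obtain ⟨f, hf, hcf⟩ : ∃ f ∈ M.erase e, 2 ≤ (f.filter fun w => ({v,w} : Finset α) ∈ H).card := by
      by_contra hno2
      push_neg at hno2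
      have h1 : ∑ f ∈ M.erase e, (f.filter fun w => ({v,w} : Finset α) ∈ H).card
          ≤ (M.erase e).card • 1 :=
        Finset.sum_le_card_nsmul _ _ 1 (fun f hfe => by have := hno2 f hfe; omega)
      have h2 : (e.filter fun w => ({v,w} : Finset α) ∈ H).card
          + ∑ f ∈ M.erase e, (f.filter fun w => ({v,w} : Finset α) ∈ H).card
          = ∑ f ∈ M, (f.filter fun w => ({v,w} : Finset α) ∈ H).card :=
        Finset.add_sum_erase M (fun f => (f.filter fun w => ({v,w} : Finset α) ∈ H).card) he
      rw [Finset.card_erase_of_mem he] at h1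
      simp only [smul_eq_mul, mul_one] at h1
      have h3 : 1 ≤ m := Finset.card_pos.2 ⟨e, he⟩
      omega
    have hfM : f ∈ M := Finset.mem_of_mem_erase hf
    have hfe : f ≠ e := Finset.ne_of_mem_erase hf
    have hfull : ∀ w ∈ f, ({v,w} : Finset α) ∈ H := by
      have hsub : f.filter (fun w => ({v,w} : Finset α) ∈ H) = f := by
        apply Finset.eq_of_subset_of_card_le (Finset.filter_subset _ _)
        rw [hc.card_two (hMH hfM)]; exact hcf
      intro w hw
      rw [← hsub] at hw
      exact (Finset.mem_filter.1 hw).2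
    obtain ⟨u', v', hf', hv'0, hu'2⟩ := hStruct f hfM
    have hv'f : v' ∈ f := by rw [hf']; simp
    have hvv' : ({v,v'} : Finset α) ∈ H := hfull v' hv'f
    -- choose y for u', then x ≠ y for u
    obtain ⟨y, hy⟩ := Finset.card_pos.1 (by omega : 0 < dD u')
    obtain ⟨x, hx⟩ : ∃ x, x ∈ ((V \ VM).filter fun w => ({u,w} : Finset α) ∈ H).erase y := by
      apply Finset.card_pos.1
      by_cases hyu : y ∈ (V \ VM).filter fun w => ({u,w} : Finset α) ∈ H
      · rw [Finset.card_erase_of_mem hyu]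
        have : dD u = ((V \ VM).filter fun w => ({u,w} : Finset α) ∈ H).card := rfl
        omega
      · rw [Finset.erase_eq_of_notMem hyu]
        have : dD u = ((V \ VM).filter fun w => ({u,w} : Finset α) ∈ H).card := rfl
        omega
    have hxy : x ≠ y := Finset.ne_of_mem_erase hx
    have hx' := Finset.mem_of_mem_erase hx
    simp only [Finset.mem_filter, Finset.mem_sdiff] at hx' hy
    exact hfree (augment3 hc hMH hd he hfM (fun h => hfe h.symm) huv hf'
      hx'.1.2 hy.1.2 hxy hx'.2 hvv' hy.2)

/-- edges meeting {u,v} number deg u + deg v - 1 when {u,v} ∈ H -/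
lemma card_meeting (hc : Cross part V H) {u v : α} (huv : ({u,v} : Finset α) ∈ H) :
    (H.filter fun f => u ∈ f ∨ v ∈ f).card + 1 = deg H u + deg H v := by
  classical
  have hne : u ≠ v := hc.ne huv
  have hsplit : (H.filter fun f => u ∈ f ∨ v ∈ f)
      = (H.filter fun f => u ∈ f) ∪ (H.filter fun f => v ∈ f) := by
    rw [Finset.filter_or]
  have hinter : (H.filter fun f => u ∈ f) ∩ (H.filter fun f => v ∈ f) = {({u,v} : Finset α)} := by
    apply Finset.Subset.antisymm
    · intro f hf
      simp only [Finset.mem_inter, Finset.mem_filter] at hf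
      obtain ⟨⟨hfH, hu⟩, ⟨_, hv⟩⟩ := hf
      obtain ⟨a, b, _, _, hab, rfl⟩ := hc _ hfH
      have hab' : a ≠ b := fun h => hab (by rw [h])
      simp only [Finset.mem_singleton]
      simp only [Finset.mem_insert, Finset.mem_singleton] at hu hv
      rcases hu with rfl | rfl <;> rcases hv with rfl | rfl <;>
        first
          | (exact absurd rfl hne)
          | (exact absurd rfl hab')
          | rfl
          | (rw [Finset.pair_comm])
    · intro f hf
      simp only [Finset.mem_singleton] at hf
      subst hf
      simp only [Finset.mem_inter, Finset.mem_filter]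
      exact ⟨⟨huv, by simp⟩, ⟨huv, by simp⟩⟩
  have := Finset.card_union_add_card_inter (H.filter fun f => u ∈ f) (H.filter fun f => v ∈ f)
  rw [hinter, Finset.card_singleton] at this
  rw [hsplit, deg, deg]
  omega

/-- a maximum matching exists -/
lemma exists_max_matching (H : Finset (Finset α)) :
    ∃ M, M ⊆ H ∧ (↑M : Set (Finset α)).Pairwise Disjoint ∧
      ∀ M' ⊆ H, (↑M' : Set (Finset α)).Pairwise Disjoint → M'.card ≤ M.card := by
  classical
  obtain ⟨M, hM, hmax⟩ := Finset.exists_max_image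
    ((H.powerset).filter fun S : Finset (Finset α) => (↑S : Set (Finset α)).Pairwise Disjoint)
    (fun S : Finset (Finset α) => S.card) ⟨∅, by simp⟩
  simp only [Finset.mem_filter, Finset.mem_powerset] at hM
  refine ⟨M, hM.1, hM.2, fun M' hM' hd => hmax M' ?_⟩
  simp only [Finset.mem_filter, Finset.mem_powerset]
  exact ⟨hM', hd⟩

/-- Main abstract upper bound -/
theorem abstract_upper (part : α → ι) : ∀ (m : ℕ) (V : Finset α) (H : Finset (Finset α))
    (I : Finset ι) (hI : I.Nonempty),
    Cross part V H → (∀ v ∈ V, part v ∈ I) →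
    (∀ i ∈ I, m + 1 ≤ (V.filter fun v => part v = i).card) →
    ¬ hasMatching H (m + 1) →
    H.card ≤ m * (V.card - I.inf' hI fun i => (V.filter fun v => part v = i).card) := by
  intro m
  induction m with
  | zero =>
    intro V H I hI hc hpI hsize hfree
    have : H = ∅ := by
      apply Finset.eq_empty_of_forall_notMem
      intro e he
      exact hfree ⟨{e}, by simpa using he, Finset.card_singleton e, by simp⟩
    simp [this]
  | succ m IH =>
    intro V H I hI hc hpI hsize hfree
    obtain ⟨M, hMH, hd, hmax⟩ := exists_max_matching H
    by_cases hc1 : M.card ≤ m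
    · -- no (m+1)-matching at all, use IH directly
      have hfree' : ¬ hasMatching H (m + 1) := by
        rintro ⟨M', hM'H, hM'c, hM'd⟩
        have := hmax M' hM'H hM'd
        omega
      have hsize' : ∀ i ∈ I, m + 1 ≤ (V.filter fun v => part v = i).card :=
        fun i hi => le_trans (by omega) (hsize i hi)
      calc H.card ≤ m * (V.card - I.inf' hI fun i => (V.filter fun v => part v = i).card) :=
            IH V H I hI hc hpI hsize' hfree'
        _ ≤ (m+1) * (V.card - I.inf' hI fun i => (V.filter fun v => part v = i).card) := by
            apply Nat.mul_le_mul_right; omega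
    · -- M.card = m+1
      push_neg at hc1
      have hMcard : M.card = m + 1 := by
        by_contra hne
        have h2 : m + 2 ≤ M.card := by omega
        obtain ⟨M', hM'M, hM'c⟩ := Finset.exists_subset_card_eq (s := M) (n := m + 2) h2
        exact hfree ⟨M', hM'M.trans hMH, hM'c,
          fun a ha b hb hab => hd (hM'M ha) (hM'M hb) hab⟩
      have hm : M.Nonempty := Finset.card_pos.1 (by omega)
      have hfree2 : ¬ hasMatching H (M.card + 1) := by rw [hMcard]; exact hfree
      have hsize2 : ∀ i ∈ I, M.card + 1 ≤ (V.filter fun v => part v = i).card := by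
        intro i hi; rw [hMcard]; exact hsize i hi
      obtain ⟨e, heM, u, v, huv, hlight⟩ :=
        exists_light_edge hc hI hpI hMH hd hm hsize2 hfree2
      rw [hMcard] at hlight
      have heH : e ∈ H := hMH heM
      have hpairH : ({u,v} : Finset α) ∈ H := huv ▸ heH
      have hpne : part u ≠ part v := hc.parts_ne hpairH
      have hne : u ≠ v := hc.ne hpairH
      have huV : u ∈ V := hc.mem_left hpairH
      have hvV : v ∈ V := hc.mem_left (nbr_symm hpairH)
      set p : ℕ := I.inf' hI fun i => (V.filter fun w => part w = i).card with hp
      set N : ℕ := V.card with hN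
      set T : ℕ := N - p with hT
      set V' : Finset α := (V.erase u).erase v with hV'
      set H' : Finset (Finset α) := H.filter (fun f => ¬ (u ∈ f ∨ v ∈ f)) with hH'
      have hV'sub : V' ⊆ V := fun a ha =>
        Finset.mem_of_mem_erase (Finset.mem_of_mem_erase ha)
      have hc' : Cross part V' H' := by
        intro f hf
        simp only [hH', Finset.mem_filter] at hf
        obtain ⟨hfH, hnuv⟩ := hf
        push_neg at hnuv
        obtain ⟨a, b, haV, hbV, hab, rfl⟩ := hc _ hfH
        have hau : a ≠ u := fun h => hnuv.1 (h ▸ (by simp))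
        have hav : a ≠ v := fun h => hnuv.2 (h ▸ (by simp))
        have hbu : b ≠ u := fun h => hnuv.1 (h ▸ (by simp))
        have hbv : b ≠ v := fun h => hnuv.2 (h ▸ (by simp))
        exact ⟨a, b, Finset.mem_erase.2 ⟨hav, Finset.mem_erase.2 ⟨hau, haV⟩⟩,
          Finset.mem_erase.2 ⟨hbv, Finset.mem_erase.2 ⟨hbu, hbV⟩⟩, hab, rfl⟩
      have hpI' : ∀ w ∈ V', part w ∈ I := fun w hw => hpI w (hV'sub hw)
      -- fibers lose at most one vertex
      have hfib : ∀ i, (V.filter fun w => part w = i).card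
          ≤ (V'.filter fun w => part w = i).card + 1 := by
        intro i
        have heq : V'.filter (fun w => part w = i)
            = ((V.filter fun w => part w = i).erase u).erase v := by
          rw [hV', Finset.filter_erase, Finset.filter_erase]
        rw [heq]
        by_cases hiu : part u = i
        · have hvni : v ∉ (V.filter fun w => part w = i).erase u := by
            simp only [Finset.mem_erase, Finset.mem_filter]
            rintro ⟨-, -, hpv⟩
            exact hpne (hiu.trans hpv.symm)
          rw [Finset.erase_eq_of_notMem hvni]
          have := Finset.card_erase_le (s := V.filter fun w => part w = i) (a := u)
          have := Finset.pred_card_le_card_erase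
            (s := V.filter fun w => part w = i) (a := u)
          omega
        · have huni : u ∉ (V.filter fun w => part w = i) := by
            simp only [Finset.mem_filter]; rintro ⟨-, h⟩; exact hiu h
          rw [Finset.erase_eq_of_notMem huni]
          have := Finset.pred_card_le_card_erase
            (s := V.filter fun w => part w = i) (a := v)
          omega
      have hsize' : ∀ i ∈ I, m + 1 ≤ (V'.filter fun w => part w = i).card := by
        intro i hi
        have h1 := hsize i hi
        have h2 := hfib i
        omega
      have hfree' : ¬ hasMatching H' (m + 1) := by
        rintro ⟨M₀, hM₀, hM₀c, hM₀d⟩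
        have heM₀ : e ∉ M₀ := by
          intro h
          have := hM₀ h
          simp only [hH', Finset.mem_filter] at this
          exact this.2 (Or.inl (huv ▸ (by simp)))
        refine hfree ⟨insert e M₀, ?_, ?_, ?_⟩
        · intro f hf
          rcases Finset.mem_insert.1 hf with rfl | hf'
          · exact heH
          · exact (Finset.mem_filter.1 (hM₀ hf')).1
        · rw [Finset.card_insert_of_notMem heM₀, hM₀c]
        · intro a ha b hb hab
          simp only [Finset.coe_insert, Set.mem_insert_iff, Finset.mem_coe] at ha hb
          have hdisj_e : ∀ f ∈ M₀, Disjoint e f := by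
            intro f hf
            have hfH' := hM₀ hf
            simp only [hH', Finset.mem_filter] at hfH'
            push_neg at hfH'
            rw [huv, Finset.disjoint_left]
            intro a' ha' hbf
            simp only [Finset.mem_insert, Finset.mem_singleton] at ha'
            rcases ha' with rfl | rfl
            · exact hfH'.2.1 hbf
            · exact hfH'.2.2 hbf
          rcases ha with rfl | ha <;> rcases hb with rfl | hb
          · exact absurd rfl hab
          · exact hdisj_e _ hb
          · exact (hdisj_e _ ha).symm
          · exact hM₀d ha hb hab
      have hIH := IH V' H' I hI hc' hpI' hsize' hfree'
      -- p' ≥ p - 1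
      set p' : ℕ := I.inf' hI fun i => (V'.filter fun w => part w = i).card with hp'
      have hp'ge : p ≤ p' + 1 := by
        have h1 : p - 1 ≤ p' := by
          apply Finset.le_inf'
          intro i hi
          have h2 : p ≤ (V.filter fun w => part w = i).card := Finset.inf'_le _ hi
          have h3 := hfib i
          omega
        omega
      have hV'card : V'.card = N - 2 := by
        rw [hV', Finset.card_erase_of_mem (Finset.mem_erase.2 ⟨hne.symm, hvV⟩),
          Finset.card_erase_of_mem huV]
        rfl
      -- T ≥ m + 2 since some non-minimal part is big
      have hTge : m + 2 ≤ T := by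
        obtain ⟨i₀, hi₀I, hpi₀⟩ := Finset.exists_mem_eq_inf' hI
          (fun i => (V.filter fun w => part w = i).card)
        have hNsum : N = ∑ i ∈ I, (V.filter fun w => part w = i).card :=
          Finset.card_eq_sum_card_fiberwise hpI
        have hNsplit : N = (V.filter fun w => part w = i₀).card
            + ∑ i ∈ I.erase i₀, (V.filter fun w => part w = i).card := by
          rw [hNsum,
            Finset.add_sum_erase I (fun i => (V.filter fun w => part w = i).card) hi₀I]
        obtain ⟨j, hjI, hjne⟩ : ∃ j ∈ I, j ≠ i₀ := by
          by_cases h : part u = i₀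
          · exact ⟨part v, hpI v hvV, fun hh => hpne (h ▸ hh ▸ rfl)⟩
          · exact ⟨part u, hpI u huV, h⟩
        have hj : (V.filter fun w => part w = j).card
            ≤ ∑ i ∈ I.erase i₀, (V.filter fun w => part w = i).card :=
          Finset.single_le_sum (f := fun i => (V.filter fun w => part w = i).card)
            (fun i _ => Nat.zero_le _) (Finset.mem_erase.2 ⟨hjne, hjI⟩)
        have hjsize := hsize j hjI
        have hppi : p = (V.filter fun w => part w = i₀).card := hpi₀
        omega
      -- combine
      have hcount : H.card = H'.card + (H.filter fun f => u ∈ f ∨ v ∈ f).card := by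
        rw [hH', add_comm]
        exact (Finset.card_filter_add_card_filter_not _).symm
      have hmeet := card_meeting hc hpairH
      have hstep1 : V'.card - p' ≤ T - 1 := by
        have hpN : p ≤ N := by
          obtain ⟨i₀, hi₀I, hpi₀⟩ := Finset.exists_mem_eq_inf' hI
            (fun i => (V.filter fun w => part w = i).card)
          have : (V.filter fun w => part w = i₀).card ≤ N :=
            Finset.card_le_card (Finset.filter_subset _ _)
          omega
        omega
      have hmul : m * (V'.card - p') ≤ m * (T - 1) := Nat.mul_le_mul_left m hstep1
      have hfin : (m+1) * (V.card - p) = (m+1) * T := by rw [hT, hN]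
      rw [hfin]
      obtain ⟨T', hT'⟩ : ∃ T', T = T' + 1 := ⟨T - 1, by omega⟩
      have hexp : (m+1) * T = m * (T - 1) + (T + m) := by
        rw [hT']
        have h9 : T' + 1 - 1 = T' := by omega
        rw [h9]; ring
      omega

end matching
end cross
end KK2

section Instantiation

variable {r : ℕ} {n : Fin r → ℕ}

lemma fiber_eq_image (i : Fin r) :
    ((Finset.univ : Finset ((j : Fin r) × Fin (n j))).filter fun v => v.1 = i)
      = Finset.univ.image (fun a : Fin (n i) => (⟨i, a⟩ : (j : Fin r) × Fin (n j))) := by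
  ext v
  simp only [Finset.mem_filter, Finset.mem_univ, true_and, Finset.mem_image]
  constructor
  · rcases v with ⟨j, a⟩
    rintro rfl
    exact ⟨a, rfl⟩
  · rintro ⟨a, rfl⟩
    rfl

lemma fiber_card (i : Fin r) :
    ((Finset.univ : Finset ((j : Fin r) × Fin (n j))).filter fun v => v.1 = i).card = n i := by
  rw [fiber_eq_image, Finset.card_image_of_injective _ sigma_mk_injective, Finset.card_univ,
    Fintype.card_fin]

lemma cross_of_subset {H : Finset (Finset ((i : Fin r) × Fin (n i)))}
    (hsub : H ⊆ crossEdges r 2 n) :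
    KK2.Cross (Sigma.fst) (Finset.univ : Finset ((i : Fin r) × Fin (n i))) H := by
  intro e he
  have hmem := hsub he
  simp only [crossEdges, Finset.mem_filter, Finset.mem_univ, true_and] at hmem
  obtain ⟨hcard, hfib⟩ := hmem
  obtain ⟨u, v, hne, rfl⟩ := Finset.card_eq_two.1 hcard
  refine ⟨u, v, Finset.mem_univ _, Finset.mem_univ _, ?_, rfl⟩
  intro h1
  have hsubf : ({u, v} : Finset ((i : Fin r) × Fin (n i)))
      ⊆ ({u,v} : Finset _).filter fun w => w.1 = u.1 := by
    intro w hw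
    simp only [Finset.mem_insert, Finset.mem_singleton] at hw
    simp only [Finset.mem_filter, Finset.mem_insert, Finset.mem_singleton]
    rcases hw with rfl | rfl
    · exact ⟨Or.inl rfl, rfl⟩
    · exact ⟨Or.inr rfl, h1.symm⟩
  have h2 : 2 ≤ (({u,v} : Finset _).filter fun w => w.1 = u.1).card := by
    calc 2 = ({u,v} : Finset ((i : Fin r) × Fin (n i))).card := hcard.symm
      _ ≤ _ := Finset.card_le_card hsubf
  have := hfib u.1
  omega

variable (hr : 0 < r)

lemma erase_zero_eq :
    (Finset.univ : Finset (Fin r)).filter (fun i : Fin r => 0 < i.val)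
      = Finset.univ.erase ⟨0, hr⟩ := by
  ext i
  simp only [Finset.mem_filter, Finset.mem_univ, true_and, Finset.mem_erase, and_true]
  constructor
  · intro h1 h2
    rw [h2] at h1
    simp at h1
  · intro h1
    rcases Nat.eq_zero_or_pos i.val with h | h
    · exact absurd (Fin.ext h) h1
    · exact h

lemma univ_card_sigma :
    (Finset.univ : Finset ((i : Fin r) × Fin (n i))).card = ∑ i : Fin r, n i := by
  rw [Finset.card_eq_sum_card_fiberwise
    (f := Sigma.fst) (t := Finset.univ) (fun x _ => Finset.mem_univ _)]
  exact Finset.sum_congr rfl (fun i _ => fiber_card i)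

lemma inf_fiber_eq (hmono : Monotone n) :
    (Finset.univ : Finset (Fin r)).inf' ⟨⟨0, hr⟩, Finset.mem_univ _⟩
      (fun i => ((Finset.univ : Finset ((j : Fin r) × Fin (n j))).filter
        fun v => v.1 = i).card) = n ⟨0, hr⟩ := by
  apply le_antisymm
  · have h1 := Finset.inf'_le (s := (Finset.univ : Finset (Fin r)))
      (f := fun i => ((Finset.univ : Finset ((j : Fin r) × Fin (n j))).filter
        fun v => v.1 = i).card) (Finset.mem_univ (⟨0, hr⟩ : Fin r))
    simpa [fiber_card] using h1
  · apply Finset.le_inf'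
    intro i _
    rw [fiber_card i]
    exact hmono (by simp [Fin.le_def])

lemma Np_eq :
    (Finset.univ : Finset ((i : Fin r) × Fin (n i))).card - n ⟨0, hr⟩
      = ∑ i ∈ Finset.univ.filter (fun i : Fin r => 0 < i.val), n i := by
  rw [univ_card_sigma, erase_zero_eq hr]
  have hsplit : ∑ i : Fin r, n i
      = n ⟨0, hr⟩ + ∑ i ∈ Finset.univ.erase ⟨0, hr⟩, n i :=
    (Finset.add_sum_erase _ n (Finset.mem_univ _)).symm
  omega

theorem upper_final (hmono : Monotone n) (k : ℕ) (hk : 1 ≤ k) (hkn : k ≤ n ⟨0, hr⟩)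
    (H : Finset (Finset ((i : Fin r) × Fin (n i)))) (hsub : H ⊆ crossEdges r 2 n)
    (hfree : ¬ hasMatching H k) :
    H.card ≤ (k - 1) * ∑ i ∈ Finset.univ.filter (fun i : Fin r => 0 < i.val), n i := by
  have hI : (Finset.univ : Finset (Fin r)).Nonempty := ⟨⟨0, hr⟩, Finset.mem_univ _⟩
  have hfree' : ¬ hasMatching H ((k - 1) + 1) := by
    have : k - 1 + 1 = k := by omega
    rw [this]; exact hfree
  have hsize : ∀ i ∈ (Finset.univ : Finset (Fin r)),
      (k - 1) + 1 ≤ ((Finset.univ : Finset ((j : Fin r) × Fin (n j))).filter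
        fun v => v.1 = i).card := by
    intro i _
    rw [fiber_card i]
    have : n ⟨0, hr⟩ ≤ n i := hmono (by simp [Fin.le_def])
    omega
  have h := KK2.abstract_upper (Sigma.fst) (k - 1) Finset.univ H Finset.univ hI
    (cross_of_subset hsub) (fun v _ => Finset.mem_univ _) hsize hfree'
  calc H.card ≤ (k-1) * ((Finset.univ : Finset ((i : Fin r) × Fin (n i))).card
        - Finset.univ.inf' hI (fun i => ((Finset.univ : Finset ((j : Fin r) × Fin (n j))).filter
          fun v => v.1 = i).card)) := h
    _ = (k - 1) * ∑ i ∈ Finset.univ.filter (fun i : Fin r => 0 < i.val), n i := by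
        rw [inf_fiber_eq hr hmono, Np_eq hr]

section Construction
variable (k : ℕ)

/-- the k-1 special vertices in the smallest part -/
def A0 : Finset ((i : Fin r) × Fin (n i)) :=
  Finset.univ.filter (fun v => v.1 = ⟨0, hr⟩ ∧ v.2.val < k - 1)

/-- all vertices outside part 0 -/
def B0 : Finset ((i : Fin r) × Fin (n i)) :=
  Finset.univ.filter (fun v => v.1 ≠ ⟨0, hr⟩)

/-- the extremal construction: all cross edges meeting A0 -/
def H0 : Finset (Finset ((i : Fin r) × Fin (n i))) :=
  ((A0 hr k) ×ˢ (B0 hr)).image (fun p => {p.1, p.2})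

lemma mem_A0 {v : (i : Fin r) × Fin (n i)} :
    v ∈ A0 (n := n) hr k ↔ v.1 = ⟨0, hr⟩ ∧ v.2.val < k - 1 := by
  simp [A0]

lemma mem_B0 {v : (i : Fin r) × Fin (n i)} : v ∈ B0 (n := n) hr ↔ v.1 ≠ ⟨0, hr⟩ := by
  simp [B0]

lemma card_A0 (hk : 1 ≤ k) (hkn : k ≤ n ⟨0, hr⟩) : (A0 (n := n) hr k).card = k - 1 := by
  have himg : A0 (n := n) hr k = (Finset.univ.filter
      (fun a : Fin (n ⟨0, hr⟩) => a.val < k - 1)).image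
      (fun a => (⟨⟨0, hr⟩, a⟩ : (i : Fin r) × Fin (n i))) := by
    ext v
    rcases v with ⟨j, a⟩
    simp only [mem_A0, Finset.mem_image, Finset.mem_filter, Finset.mem_univ, true_and]
    constructor
    · rintro ⟨rfl, h2⟩
      exact ⟨a, h2, rfl⟩
    · rintro ⟨b, hb, heq⟩
      obtain ⟨h1, h2⟩ := Sigma.mk.inj_iff.1 heq
      subst h1
      have : b = a := by simpa using h2
      subst this
      exact ⟨rfl, hb⟩
  rw [himg, Finset.card_image_of_injective _ sigma_mk_injective]
  have hb : k - 1 < n ⟨0, hr⟩ := by omega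
  have hIio : Finset.univ.filter (fun a : Fin (n ⟨0, hr⟩) => a.val < k - 1)
      = Finset.Iio (⟨k - 1, hb⟩ : Fin (n ⟨0, hr⟩)) := by
    ext a
    simp [Finset.mem_Iio, Fin.lt_def]
  rw [hIio, Fin.card_Iio]

lemma card_B0 : (B0 (n := n) hr).card = ∑ i ∈ Finset.univ.filter (fun i : Fin r => 0 < i.val), n i := by
  have h1 : (B0 (n := n) hr).card + ((Finset.univ : Finset ((i : Fin r) × Fin (n i))).filter
      (fun v => v.1 = ⟨0, hr⟩)).card = (Finset.univ : Finset ((i : Fin r) × Fin (n i))).card := by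
    rw [B0]
    have := Finset.card_filter_add_card_filter_not
      (s := (Finset.univ : Finset ((i : Fin r) × Fin (n i))))
      (p := fun v => v.1 = ⟨0, hr⟩)
    rw [add_comm] at this
    convert this using 2
  rw [fiber_card] at h1
  have h2 := Np_eq (n := n) hr
  omega

lemma H0_subset : H0 (n := n) hr k ⊆ crossEdges r 2 n := by
  intro e he
  simp only [H0, Finset.mem_image, Finset.mem_product] at he
  obtain ⟨⟨a, b⟩, ⟨haA, hbB⟩, rfl⟩ := he
  rw [mem_A0] at haA
  rw [mem_B0] at hbB
  have hne1 : a.1 ≠ b.1 := by rw [haA.1]; exact fun h => hbB h.symm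
  have hne : a ≠ b := fun h => hne1 (by rw [h])
  simp only [crossEdges, Finset.mem_filter, Finset.mem_univ, true_and]
  refine ⟨Finset.card_pair hne, ?_⟩
  intro i
  apply Finset.card_le_one.2
  intro x hx y hy
  simp only [Finset.mem_filter, Finset.mem_insert, Finset.mem_singleton] at hx hy
  rcases hx.1 with rfl | rfl <;> rcases hy.1 with rfl | rfl <;>
    first | rfl | (exact absurd (hx.2.trans hy.2.symm) hne1) |
      (exact absurd (hy.2.trans hx.2.symm) hne1)

lemma card_H0 (hk : 1 ≤ k) (hkn : k ≤ n ⟨0, hr⟩) :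
    (H0 (n := n) hr k).card
      = (k - 1) * ∑ i ∈ Finset.univ.filter (fun i : Fin r => 0 < i.val), n i := by
  rw [H0, Finset.card_image_of_injOn, Finset.card_product, card_A0 (n := n) hr k hk hkn, card_B0]
  intro p hp p' hp' heq
  simp only at heq
  simp only [Finset.mem_coe, Finset.mem_product, mem_A0, mem_B0] at hp hp'
  have h1 : p.1 ∈ ({p'.1, p'.2} : Finset ((i : Fin r) × Fin (n i))) := by
    rw [← heq]; simp
  have h2 : p.2 ∈ ({p'.1, p'.2} : Finset ((i : Fin r) × Fin (n i))) := by
    rw [← heq]; simp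
  simp only [Finset.mem_insert, Finset.mem_singleton] at h1 h2
  have hp1 : p.1 = p'.1 := by
    rcases h1 with h | h
    · exact h
    · exfalso; apply hp'.2; rw [← h]; exact hp.1.1
  have hp2 : p.2 = p'.2 := by
    rcases h2 with h | h
    · exfalso; apply hp.2; rw [h]; exact hp'.1.1
    · exact h
  exact Prod.ext hp1 hp2

lemma H0_free (hpos : ∀ i, 0 < n i) (hk : 1 ≤ k) (hkn : k ≤ n ⟨0, hr⟩) :
    ¬ hasMatching (H0 (n := n) hr k) k := by
  rintro ⟨M, hsub, hcard, hd⟩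
  classical
  have hex : ∀ e ∈ M, ∃ a, a ∈ e ∧ a ∈ A0 (n := n) hr k := by
    intro e he
    have := hsub he
    simp only [H0, Finset.mem_image, Finset.mem_product] at this
    obtain ⟨⟨a, b⟩, ⟨haA, _⟩, rfl⟩ := this
    exact ⟨a, by simp, haA⟩
  set f : Finset ((i : Fin r) × Fin (n i)) → ((i : Fin r) × Fin (n i)) :=
    fun e => if h : ∃ a, a ∈ e ∧ a ∈ A0 (n := n) hr k then h.choose
      else ⟨⟨0, hr⟩, ⟨0, hpos _⟩⟩ with hf
  have hfspec : ∀ e ∈ M, f e ∈ e ∧ f e ∈ A0 (n := n) hr k := by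
    intro e he
    have h := hex e he
    rw [hf]
    simp only [dif_pos h]
    exact h.choose_spec
  have hinj : Set.InjOn f M := by
    intro e he e' he' heq
    by_contra hne
    have h1 := (hfspec e he).1
    have h2 := (hfspec e' he').1
    rw [heq] at h1
    exact (Finset.disjoint_left.1 (hd he he' hne) h1) h2 |>.elim
  have hle : M.card ≤ (A0 (n := n) hr k).card :=
    Finset.card_le_card_of_injOn f (fun e he => (hfspec e he).2) hinj
  rw [hcard, card_A0 (n := n) hr k hk hkn] at hle
  omega

end Construction

theorem stmt0 (r k : ℕ) (hr : 0 < r) (n : Fin r → ℕ) (hmono : Monotone n)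
    (hpos : ∀ i, 0 < n i) (hk : 1 ≤ k) (hkn : k ≤ n ⟨0, hr⟩) :
    IsGreatest {m : ℕ | ∃ H ⊆ crossEdges r 2 n, ¬ hasMatching H k ∧ H.card = m}
      ((k - 1) * ∑ i ∈ Finset.univ.filter (fun i : Fin r => 0 < i.val), n i) := by
  constructor
  · exact ⟨H0 (n := n) hr k, H0_subset hr k, H0_free hr k hpos hk hkn,
      card_H0 hr k hk hkn⟩
  · rintro x ⟨H, hsub, hfree, rfl⟩
    exact upper_final hr hmono k hk hkn H hsub hfree
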